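/- Let 𝒳, 𝒮, 𝒴, 𝒰 be finite nonempty types and L a positive integer. Let p be a pmf on 𝒳 × 𝒮; for each (x,s) let W(·|x,s) be a pmf on 𝒴; for each ℓ ∈ {1,…,L} and each y ∈ 𝒴 let V_ℓ(·|y) be a pmf on 𝒰. Consider the joint pmf on 𝒳 × 𝒮 × 𝒴^L × 𝒰^L given by q(x,s,y,u) = p(x,s) · Π_{ℓ=1}^L W(y_ℓ|x,s) · Π_{ℓ=1}^L V_ℓ(u_ℓ|y_ℓ). Then for every subset 𝓛 ⊆ {1,…,L}, the conditional mutual informations induced by q satisfy I( U_𝓛 ; Y_{\{1,…,L\}} | U_{𝓛ᶜ}, S ) = Σ_{ℓ∈𝓛} I( U_ℓ ; Y_ℓ | X, S ) + I( U_𝓛 ; X | U_{𝓛ᶜ}, S ), where U_𝓛 denotes the tuple (U_ℓ)_{ℓ∈𝓛} and 𝓛ᶜ = {1,…,L} ∖ 𝓛. -/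

import Mathlib

open scoped Classical

/-- Probability of an event under a finitely supported distribution. -/
noncomputable def prOf {Ω : Type*} [Fintype Ω] (q : Ω → ℝ) (s : Set Ω) : ℝ :=
  ∑ ω, if ω ∈ s then q ω else 0

/-- Conditional mutual information `I(f(ω); g(ω) | h(ω))` of the random
variables `f`, `g`, `h` under the joint pmf `q` on the finite sample space `Ω`:
`∑_{a,b,c} q(a,b,c) log( q(a,b,c) q_C(c) / (q_{AC}(a,c) q_{BC}(b,c)) )`,
written as a sum over `ω` (terms with `q ω = 0` contribute `0`). -/
noncomputable def condMI {Ω A B C : Type*} [Fintype Ω]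
    (q : Ω → ℝ) (f : Ω → A) (g : Ω → B) (h : Ω → C) : ℝ :=
  ∑ ω, q ω * Real.log
    ((prOf q {ω' | f ω' = f ω ∧ g ω' = g ω ∧ h ω' = h ω} *
        prOf q {ω' | h ω' = h ω}) /
      (prOf q {ω' | f ω' = f ω ∧ h ω' = h ω} *
        prOf q {ω' | g ω' = g ω ∧ h ω' = h ω}))

lemma sum_pi_cond {ι β : Type*} [Fintype ι] [DecidableEq ι] [Fintype β]
    (T : Finset ι) (c : ι → β) (f : ι → β → ℝ)
    {D : ∀ g : ι → β, Decidable (∀ i ∈ T, g i = c i)} :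
    ∑ g : ι → β, (@ite _ (∀ i ∈ T, g i = c i) (D g) (∏ i, f i (g i)) 0)
      = (∏ i ∈ T, f i (c i)) * ∏ i ∈ Tᶜ, ∑ b, f i b := by
  classical
  set F : ι → β → ℝ := fun i b => if i ∈ T then (if b = c i then f i b else 0) else f i b with hF
  have key : ∀ g : ι → β,
      (@ite _ (∀ i ∈ T, g i = c i) (D g) (∏ i, f i (g i)) 0) = ∏ i, F i (g i) := by
    intro g
    by_cases h : ∀ i ∈ T, g i = c i
    · rw [if_pos h]
      refine Finset.prod_congr rfl fun i _ => ?_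
      by_cases hi : i ∈ T
      · simp [hF, hi, h i hi]
      · simp [hF, hi]
    · rw [if_neg h]
      push_neg at h
      obtain ⟨i, hi, hne⟩ := h
      refine (Finset.prod_eq_zero (Finset.mem_univ i) ?_).symm
      simp [hF, hi, hne]
  rw [Finset.sum_congr rfl fun g _ => key g]
  rw [← Fintype.piFinset_univ]
  rw [← Finset.prod_univ_sum (t := fun _ => Finset.univ) (f := F)]
  rw [← Finset.prod_mul_prod_compl T]
  congr 1
  · refine Finset.prod_congr rfl fun i hi => ?_
    simp [hF, hi]
  · refine Finset.prod_congr rfl fun i hi => ?_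
    simp [hF, Finset.mem_compl.mp hi]

lemma marg {X S Y U : Type*} [Fintype X] [Fintype S] [Fintype Y] [Fintype U]
    {L : ℕ} (p : X × S → ℝ)
    (W : X → S → Y → ℝ) (hW1 : ∀ x s, ∑ y, W x s y = 1)
    (V : Fin L → Y → U → ℝ) (hV1 : ∀ ℓ y, ∑ u, V ℓ y u = 1)
    (q : X × S × (Fin L → Y) × (Fin L → U) → ℝ)
    (hq : ∀ x s y u,
      q (x, s, y, u) = p (x, s) * (∏ ℓ, W x s (y ℓ)) * ∏ ℓ, V ℓ (y ℓ) (u ℓ))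
    (E : Finset X) (TY TU : Finset (Fin L)) (s : S) (y : Fin L → Y) (u : Fin L → U) :
    prOf q {ω' | ω'.1 ∈ E ∧ ω'.2.1 = s ∧ (∀ ℓ ∈ TY, ω'.2.2.1 ℓ = y ℓ) ∧
        (∀ ℓ ∈ TU, ω'.2.2.2 ℓ = u ℓ)}
      = ∑ x' ∈ E, p (x', s) *
          ((∏ ℓ ∈ TY, W x' s (y ℓ)) * (∏ ℓ ∈ TY ∩ TU, V ℓ (y ℓ) (u ℓ)) *
            ∏ ℓ ∈ TU \ TY, ∑ y'', W x' s y'' * V ℓ y'' (u ℓ)) := by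
  classical
  unfold prOf
  rw [Fintype.sum_prod_type]
  simp only [Fintype.sum_prod_type, Set.mem_setOf_eq, hq]
  have hu : ∀ (x' : X) (s' : S) (y' : Fin L → Y),
      (∑ u' : Fin L → U, if (x' ∈ E ∧ s' = s ∧ (∀ ℓ ∈ TY, y' ℓ = y ℓ) ∧
          (∀ ℓ ∈ TU, u' ℓ = u ℓ)) then
          p (x', s') * (∏ ℓ, W x' s' (y' ℓ)) * ∏ ℓ, V ℓ (y' ℓ) (u' ℓ) else 0)
        = if (x' ∈ E ∧ s' = s ∧ (∀ ℓ ∈ TY, y' ℓ = y ℓ)) then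
            p (x', s') * (∏ ℓ, W x' s' (y' ℓ)) * ∏ ℓ ∈ TU, V ℓ (y' ℓ) (u ℓ) else 0 := by
    intro x' s' y'
    by_cases hP : x' ∈ E ∧ s' = s ∧ (∀ ℓ ∈ TY, y' ℓ = y ℓ)
    · rw [if_pos hP]
      have h1 : ∀ u' : Fin L → U,
          (if (x' ∈ E ∧ s' = s ∧ (∀ ℓ ∈ TY, y' ℓ = y ℓ) ∧ (∀ ℓ ∈ TU, u' ℓ = u ℓ)) then
            p (x', s') * (∏ ℓ, W x' s' (y' ℓ)) * ∏ ℓ, V ℓ (y' ℓ) (u' ℓ) else 0)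
          = p (x', s') * (∏ ℓ, W x' s' (y' ℓ)) *
              (if (∀ ℓ ∈ TU, u' ℓ = u ℓ) then ∏ ℓ, V ℓ (y' ℓ) (u' ℓ) else 0) := by
        intro u'
        by_cases hQ : ∀ ℓ ∈ TU, u' ℓ = u ℓ
        · rw [if_pos ⟨hP.1, hP.2.1, hP.2.2, hQ⟩, if_pos hQ]
        · rw [if_neg (by tauto), if_neg hQ, mul_zero]
      rw [Finset.sum_congr rfl fun u' _ => h1 u', ← Finset.mul_sum,
        sum_pi_cond TU u (fun ℓ v => V ℓ (y' ℓ) v)]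
      simp [hV1]
    · rw [if_neg hP]
      refine Finset.sum_eq_zero fun u' _ => ?_
      rw [if_neg (by tauto)]
  rw [Finset.sum_congr rfl fun x' _ => Finset.sum_congr rfl fun s' _ =>
    Finset.sum_congr rfl fun y' _ => hu x' s' y']
  have hy : ∀ (x' : X) (s' : S),
      (∑ y' : Fin L → Y, if (x' ∈ E ∧ s' = s ∧ (∀ ℓ ∈ TY, y' ℓ = y ℓ)) then
          p (x', s') * (∏ ℓ, W x' s' (y' ℓ)) * ∏ ℓ ∈ TU, V ℓ (y' ℓ) (u ℓ) else 0)
        = if (x' ∈ E ∧ s' = s) then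
            p (x', s') * ((∏ ℓ ∈ TY, W x' s' (y ℓ)) * (∏ ℓ ∈ TY ∩ TU, V ℓ (y ℓ) (u ℓ)) *
              ∏ ℓ ∈ TU \ TY, ∑ y'', W x' s' y'' * V ℓ y'' (u ℓ)) else 0 := by
    intro x' s'
    have hfac : ∀ y' : Fin L → Y,
        p (x', s') * (∏ ℓ, W x' s' (y' ℓ)) * ∏ ℓ ∈ TU, V ℓ (y' ℓ) (u ℓ)
          = p (x', s') * ∏ ℓ, (W x' s' (y' ℓ) * if ℓ ∈ TU then V ℓ (y' ℓ) (u ℓ) else 1) := by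
      intro y'
      rw [Finset.prod_mul_distrib, mul_assoc]
      congr 2
      rw [Finset.prod_ite_mem, Finset.univ_inter]
    by_cases hP : x' ∈ E ∧ s' = s
    · rw [if_pos hP]
      have step : ∀ y' : Fin L → Y,
          (if (x' ∈ E ∧ s' = s ∧ (∀ ℓ ∈ TY, y' ℓ = y ℓ)) then
            p (x', s') * (∏ ℓ, W x' s' (y' ℓ)) * ∏ ℓ ∈ TU, V ℓ (y' ℓ) (u ℓ) else 0)
          = p (x', s') * (if (∀ ℓ ∈ TY, y' ℓ = y ℓ) then
              ∏ ℓ, (W x' s' (y' ℓ) * if ℓ ∈ TU then V ℓ (y' ℓ) (u ℓ) else 1) else 0) := by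
        intro y'
        by_cases hQ : ∀ ℓ ∈ TY, y' ℓ = y ℓ
        · rw [if_pos ⟨hP.1, hP.2, hQ⟩, if_pos hQ, hfac y']
        · rw [if_neg (by tauto), if_neg hQ, mul_zero]
      rw [Finset.sum_congr rfl fun y' _ => step y', ← Finset.mul_sum,
        sum_pi_cond TY y (fun ℓ t => W x' s' t * if ℓ ∈ TU then V ℓ t (u ℓ) else 1)]
      congr 1
      rw [Finset.prod_mul_distrib]
      congr 1
      · congr 1
        rw [Finset.prod_ite_mem, Finset.inter_comm]
      · have h2 : ∀ ℓ ∈ TYᶜ, (∑ b, (W x' s' b * if ℓ ∈ TU then V ℓ b (u ℓ) else 1))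
            = if ℓ ∈ TU then (∑ y'', W x' s' y'' * V ℓ y'' (u ℓ)) else 1 := by
          intro ℓ _
          by_cases hT : ℓ ∈ TU
          · simp [hT]
          · simp [hT, hW1]
        rw [Finset.prod_congr rfl h2, Finset.prod_ite_mem,
          show TYᶜ ∩ TU = TU \ TY by ext a; simp [and_comm]]
    · rw [if_neg hP]
      refine Finset.sum_eq_zero fun y' _ => ?_
      rw [if_neg (by tauto)]
  rw [Finset.sum_congr rfl fun x' _ => Finset.sum_congr rfl fun s' _ => hy x' s']
  have hs : ∀ x' : X,
      (∑ s' : S, if (x' ∈ E ∧ s' = s) then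
          p (x', s') * ((∏ ℓ ∈ TY, W x' s' (y ℓ)) * (∏ ℓ ∈ TY ∩ TU, V ℓ (y ℓ) (u ℓ)) *
            ∏ ℓ ∈ TU \ TY, ∑ y'', W x' s' y'' * V ℓ y'' (u ℓ)) else 0)
        = if x' ∈ E then
            p (x', s) * ((∏ ℓ ∈ TY, W x' s (y ℓ)) * (∏ ℓ ∈ TY ∩ TU, V ℓ (y ℓ) (u ℓ)) *
              ∏ ℓ ∈ TU \ TY, ∑ y'', W x' s y'' * V ℓ y'' (u ℓ)) else 0 := by
    intro x'
    by_cases hE : x' ∈ E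
    · simp only [hE, true_and]
      rw [Finset.sum_ite_eq' Finset.univ s]
      simp
    · simp [hE]
  rw [Finset.sum_congr rfl fun x' _ => hs x', Finset.sum_ite_mem, Finset.univ_inter]

lemma cond_split {α : Type*} [Fintype α] (𝓛 : Finset α) (P : α → Prop) :
    ((∀ ℓ ∈ 𝓛, P ℓ) ∧ (∀ ℓ, ℓ ∉ 𝓛 → P ℓ)) ↔ ∀ ℓ ∈ (Finset.univ : Finset α), P ℓ := by
  constructor
  · rintro ⟨h1, h2⟩ ℓ _
    by_cases hℓ : ℓ ∈ 𝓛
    · exact h1 ℓ hℓ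
    · exact h2 ℓ hℓ
  · exact fun h => ⟨fun ℓ _ => h ℓ (Finset.mem_univ ℓ), fun ℓ _ => h ℓ (Finset.mem_univ ℓ)⟩

lemma loghelp (a b c d : ℝ) (ha : a ≠ 0) (hb : b ≠ 0) (hc : c ≠ 0) (hd : d ≠ 0) :
    Real.log (a * b / (c * d))
      = Real.log a + Real.log b - Real.log c - Real.log d := by
  rw [Real.log_div (mul_ne_zero ha hb) (mul_ne_zero hc hd),
    Real.log_mul ha hb, Real.log_mul hc hd]
  ring

/-- for the CEO joint pmf
`q(x,s,y,u) = p(x,s) ∏ ℓ W(y_ℓ|x,s) ∏ ℓ V_ℓ(u_ℓ|y_ℓ)` and any set `𝓛` of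
sensors, `I(U_𝓛; Y^L | U_{𝓛ᶜ}, S) = ∑_{ℓ∈𝓛} I(U_ℓ; Y_ℓ | X, S) +
I(U_𝓛; X | U_{𝓛ᶜ}, S)`. -/
theorem stmt14 {X S Y U : Type*} [Fintype X] [Fintype S] [Fintype Y] [Fintype U]
    [Nonempty X] [Nonempty S] [Nonempty Y] [Nonempty U]
    (L : ℕ) (hL : 0 < L)
    (p : X × S → ℝ) (hp0 : ∀ z, 0 ≤ p z) (hp1 : ∑ z, p z = 1)
    (W : X → S → Y → ℝ) (hW0 : ∀ x s y, 0 ≤ W x s y) (hW1 : ∀ x s, ∑ y, W x s y = 1)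
    (V : Fin L → Y → U → ℝ) (hV0 : ∀ ℓ y u, 0 ≤ V ℓ y u) (hV1 : ∀ ℓ y, ∑ u, V ℓ y u = 1)
    (q : X × S × (Fin L → Y) × (Fin L → U) → ℝ)
    (hq : ∀ x s y u,
      q (x, s, y, u) = p (x, s) * (∏ ℓ, W x s (y ℓ)) * ∏ ℓ, V ℓ (y ℓ) (u ℓ))
    (𝓛 : Finset (Fin L)) :
    condMI q (fun ω => fun ℓ : {ℓ // ℓ ∈ 𝓛} => ω.2.2.2 ℓ.1)
        (fun ω => ω.2.2.1)
        (fun ω => ((fun ℓ : {ℓ // ℓ ∉ 𝓛} => ω.2.2.2 ℓ.1), ω.2.1)) =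
      (∑ ℓ ∈ 𝓛, condMI q (fun ω => ω.2.2.2 ℓ) (fun ω => ω.2.2.1 ℓ)
          (fun ω => (ω.1, ω.2.1))) +
        condMI q (fun ω => fun ℓ : {ℓ // ℓ ∈ 𝓛} => ω.2.2.2 ℓ.1)
          (fun ω => ω.1)
          (fun ω => ((fun ℓ : {ℓ // ℓ ∉ 𝓛} => ω.2.2.2 ℓ.1), ω.2.1)) := by
  classical
  simp only [condMI]
  rw [Finset.sum_comm, ← Finset.sum_add_distrib]
  refine Finset.sum_congr rfl fun ω _ => ?_
  obtain ⟨x, s, y, u⟩ := ω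
  rw [← Finset.mul_sum, ← mul_add]
  by_cases hq0 : q (x, s, y, u) = 0
  · rw [hq0]; ring
  congr 1
  dsimp only
  -- positivity facts
  rw [hq] at hq0
  have hne : (p (x, s) * ∏ ℓ, W x s (y ℓ)) * ∏ ℓ, V ℓ (y ℓ) (u ℓ) ≠ 0 := hq0
  obtain ⟨h12, hV'⟩ := mul_ne_zero_iff.mp hne
  obtain ⟨hp', hW'⟩ := mul_ne_zero_iff.mp h12
  have hpp : 0 < p (x, s) := (hp0 _).lt_of_ne (Ne.symm hp')
  have hWp : ∀ ℓ, 0 < W x s (y ℓ) := fun ℓ =>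
    (hW0 _ _ _).lt_of_ne (Ne.symm (Finset.prod_ne_zero_iff.mp hW' ℓ (Finset.mem_univ ℓ)))
  have hVp : ∀ ℓ, 0 < V ℓ (y ℓ) (u ℓ) := fun ℓ =>
    (hV0 _ _ _).lt_of_ne (Ne.symm (Finset.prod_ne_zero_iff.mp hV' ℓ (Finset.mem_univ ℓ)))
  have hφ0 : ∀ (ℓ : Fin L) (x' : X), 0 ≤ ∑ t, W x' s t * V ℓ t (u ℓ) := fun ℓ x' =>
    Finset.sum_nonneg fun t _ => mul_nonneg (hW0 _ _ _) (hV0 _ _ _)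
  have hφp : ∀ ℓ, 0 < ∑ t, W x s t * V ℓ t (u ℓ) := fun ℓ =>
    lt_of_lt_of_le (mul_pos (hWp ℓ) (hVp ℓ))
      (Finset.single_le_sum (f := fun t => W x s t * V ℓ t (u ℓ))
        (fun t _ => mul_nonneg (hW0 _ _ _) (hV0 _ _ _)) (Finset.mem_univ (y ℓ)))
  have hgp : 0 < ∑ x', p (x', s) * ∏ ℓ, W x' s (y ℓ) :=
    lt_of_lt_of_le (mul_pos hpp (Finset.prod_pos fun ℓ _ => hWp ℓ))
      (Finset.single_le_sum (f := fun x' => p (x', s) * ∏ ℓ, W x' s (y ℓ))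
        (fun x' _ => mul_nonneg (hp0 _) (Finset.prod_nonneg fun ℓ _ => hW0 _ _ _))
        (Finset.mem_univ x))
  have hhp : 0 < ∑ x', p (x', s) * ∏ ℓ ∈ 𝓛ᶜ, ∑ t, W x' s t * V ℓ t (u ℓ) :=
    lt_of_lt_of_le (mul_pos hpp (Finset.prod_pos fun ℓ _ => hφp ℓ))
      (Finset.single_le_sum
        (f := fun x' => p (x', s) * ∏ ℓ ∈ 𝓛ᶜ, ∑ t, W x' s t * V ℓ t (u ℓ))
        (fun x' _ => mul_nonneg (hp0 _) (Finset.prod_nonneg fun ℓ _ => hφ0 ℓ x'))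
        (Finset.mem_univ x))
  have hkp : 0 < ∑ x', p (x', s) * ∏ ℓ, ∑ t, W x' s t * V ℓ t (u ℓ) :=
    lt_of_lt_of_le (mul_pos hpp (Finset.prod_pos fun ℓ _ => hφp ℓ))
      (Finset.single_le_sum
        (f := fun x' => p (x', s) * ∏ ℓ, ∑ t, W x' s t * V ℓ t (u ℓ))
        (fun x' _ => mul_nonneg (hp0 _) (Finset.prod_nonneg fun ℓ _ => hφ0 ℓ x'))
        (Finset.mem_univ x))
  -- evaluations of the prOf's
  have eA : prOf q {ω' | ((fun ℓ : {ℓ // ℓ ∈ 𝓛} => ω'.2.2.2 ℓ.1) = fun ℓ => u ℓ.1) ∧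
      ω'.2.2.1 = y ∧ ((fun ℓ : {ℓ // ℓ ∉ 𝓛} => ω'.2.2.2 ℓ.1), ω'.2.1) = (fun ℓ => u ℓ.1, s)}
      = (∑ x', p (x', s) * ∏ ℓ, W x' s (y ℓ)) * ∏ ℓ, V ℓ (y ℓ) (u ℓ) := by
    rw [show {ω' | ((fun ℓ : {ℓ // ℓ ∈ 𝓛} => ω'.2.2.2 ℓ.1) = fun ℓ => u ℓ.1) ∧
        ω'.2.2.1 = y ∧ ((fun ℓ : {ℓ // ℓ ∉ 𝓛} => ω'.2.2.2 ℓ.1), ω'.2.1) = (fun ℓ => u ℓ.1, s)}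
        = {ω' : X × S × (Fin L → Y) × (Fin L → U) | ω'.1 ∈ (Finset.univ : Finset X) ∧
          ω'.2.1 = s ∧ (∀ ℓ ∈ (Finset.univ : Finset (Fin L)), ω'.2.2.1 ℓ = y ℓ) ∧
          (∀ ℓ ∈ (Finset.univ : Finset (Fin L)), ω'.2.2.2 ℓ = u ℓ)} from by
      ext ω'
      have hs := cond_split 𝓛 (fun ℓ => ω'.2.2.2 ℓ = u ℓ)
      simp only [Set.mem_setOf_eq, funext_iff, Subtype.forall, Prod.mk.injEq,
        Finset.mem_univ, true_and, true_implies] at *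
      tauto]
    rw [marg p W hW1 V hV1 q hq _ _ _ s y u]
    have hterm : ∀ x' ∈ (Finset.univ : Finset X), p (x', s) *
        ((∏ ℓ ∈ (Finset.univ : Finset (Fin L)), W x' s (y ℓ)) *
          (∏ ℓ ∈ (Finset.univ : Finset (Fin L)) ∩ Finset.univ, V ℓ (y ℓ) (u ℓ)) *
          ∏ ℓ ∈ (Finset.univ : Finset (Fin L)) \ Finset.univ, ∑ t, W x' s t * V ℓ t (u ℓ))
        = (p (x', s) * ∏ ℓ, W x' s (y ℓ)) * ∏ ℓ, V ℓ (y ℓ) (u ℓ) := fun x' _ => by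
      rw [Finset.sdiff_self, Finset.prod_empty, mul_one, Finset.univ_inter, mul_assoc]
    rw [Finset.sum_congr rfl hterm, ← Finset.sum_mul]
  have eC : prOf q {ω' | ((fun ℓ : {ℓ // ℓ ∉ 𝓛} => ω'.2.2.2 ℓ.1), ω'.2.1) = (fun ℓ => u ℓ.1, s)}
      = ∑ x', p (x', s) * ∏ ℓ ∈ 𝓛ᶜ, ∑ t, W x' s t * V ℓ t (u ℓ) := by
    rw [show {ω' | ((fun ℓ : {ℓ // ℓ ∉ 𝓛} => ω'.2.2.2 ℓ.1), ω'.2.1) = (fun ℓ => u ℓ.1, s)}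
        = {ω' : X × S × (Fin L → Y) × (Fin L → U) | ω'.1 ∈ (Finset.univ : Finset X) ∧
          ω'.2.1 = s ∧ (∀ ℓ ∈ (∅ : Finset (Fin L)), ω'.2.2.1 ℓ = y ℓ) ∧
          (∀ ℓ ∈ 𝓛ᶜ, ω'.2.2.2 ℓ = u ℓ)} from by
      ext ω'
      simp only [Set.mem_setOf_eq, funext_iff, Subtype.forall, Prod.mk.injEq,
        Finset.mem_univ, true_and, true_implies, Finset.mem_compl,
        Finset.notMem_empty, false_implies, implies_true] at *
      tauto]
    rw [marg p W hW1 V hV1 q hq _ _ _ s y u]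
    refine Finset.sum_congr rfl fun x' _ => ?_
    rw [Finset.prod_empty, Finset.empty_inter, Finset.prod_empty, Finset.sdiff_empty,
      one_mul, one_mul]
  have eAC : prOf q {ω' | ((fun ℓ : {ℓ // ℓ ∈ 𝓛} => ω'.2.2.2 ℓ.1) = fun ℓ => u ℓ.1) ∧
      ((fun ℓ : {ℓ // ℓ ∉ 𝓛} => ω'.2.2.2 ℓ.1), ω'.2.1) = (fun ℓ => u ℓ.1, s)}
      = ∑ x', p (x', s) * ∏ ℓ, ∑ t, W x' s t * V ℓ t (u ℓ) := by
    rw [show {ω' | ((fun ℓ : {ℓ // ℓ ∈ 𝓛} => ω'.2.2.2 ℓ.1) = fun ℓ => u ℓ.1) ∧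
        ((fun ℓ : {ℓ // ℓ ∉ 𝓛} => ω'.2.2.2 ℓ.1), ω'.2.1) = (fun ℓ => u ℓ.1, s)}
        = {ω' : X × S × (Fin L → Y) × (Fin L → U) | ω'.1 ∈ (Finset.univ : Finset X) ∧
          ω'.2.1 = s ∧ (∀ ℓ ∈ (∅ : Finset (Fin L)), ω'.2.2.1 ℓ = y ℓ) ∧
          (∀ ℓ ∈ (Finset.univ : Finset (Fin L)), ω'.2.2.2 ℓ = u ℓ)} from by
      ext ω'
      have hs := cond_split 𝓛 (fun ℓ => ω'.2.2.2 ℓ = u ℓ)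
      simp only [Set.mem_setOf_eq, funext_iff, Subtype.forall, Prod.mk.injEq,
        Finset.mem_univ, true_and, true_implies, Finset.notMem_empty,
        false_implies, implies_true] at *
      tauto]
    rw [marg p W hW1 V hV1 q hq _ _ _ s y u]
    refine Finset.sum_congr rfl fun x' _ => ?_
    rw [Finset.prod_empty, Finset.empty_inter, Finset.prod_empty, Finset.sdiff_empty,
      one_mul, one_mul]
  have eBC : prOf q {ω' | ω'.2.2.1 = y ∧
      ((fun ℓ : {ℓ // ℓ ∉ 𝓛} => ω'.2.2.2 ℓ.1), ω'.2.1) = (fun ℓ => u ℓ.1, s)}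
      = (∑ x', p (x', s) * ∏ ℓ, W x' s (y ℓ)) * ∏ ℓ ∈ 𝓛ᶜ, V ℓ (y ℓ) (u ℓ) := by
    rw [show {ω' | ω'.2.2.1 = y ∧
        ((fun ℓ : {ℓ // ℓ ∉ 𝓛} => ω'.2.2.2 ℓ.1), ω'.2.1) = (fun ℓ => u ℓ.1, s)}
        = {ω' : X × S × (Fin L → Y) × (Fin L → U) | ω'.1 ∈ (Finset.univ : Finset X) ∧
          ω'.2.1 = s ∧ (∀ ℓ ∈ (Finset.univ : Finset (Fin L)), ω'.2.2.1 ℓ = y ℓ) ∧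
          (∀ ℓ ∈ 𝓛ᶜ, ω'.2.2.2 ℓ = u ℓ)} from by
      ext ω'
      simp only [Set.mem_setOf_eq, funext_iff, Subtype.forall, Prod.mk.injEq,
        Finset.mem_univ, true_and, true_implies, Finset.mem_compl] at *
      tauto]
    rw [marg p W hW1 V hV1 q hq _ _ _ s y u]
    have hterm : ∀ x' ∈ (Finset.univ : Finset X), p (x', s) *
        ((∏ ℓ ∈ (Finset.univ : Finset (Fin L)), W x' s (y ℓ)) *
          (∏ ℓ ∈ (Finset.univ : Finset (Fin L)) ∩ 𝓛ᶜ, V ℓ (y ℓ) (u ℓ)) *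
          ∏ ℓ ∈ 𝓛ᶜ \ (Finset.univ : Finset (Fin L)), ∑ t, W x' s t * V ℓ t (u ℓ))
        = (p (x', s) * ∏ ℓ, W x' s (y ℓ)) * ∏ ℓ ∈ 𝓛ᶜ, V ℓ (y ℓ) (u ℓ) := fun x' _ => by
      rw [Finset.univ_inter, show 𝓛ᶜ \ (Finset.univ : Finset (Fin L)) = ∅ by simp,
        Finset.prod_empty, mul_one, mul_assoc]
    rw [Finset.sum_congr rfl hterm, ← Finset.sum_mul]
  have eA2 : prOf q {ω' | ((fun ℓ : {ℓ // ℓ ∈ 𝓛} => ω'.2.2.2 ℓ.1) = fun ℓ => u ℓ.1) ∧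
      ω'.1 = x ∧ ((fun ℓ : {ℓ // ℓ ∉ 𝓛} => ω'.2.2.2 ℓ.1), ω'.2.1) = (fun ℓ => u ℓ.1, s)}
      = p (x, s) * ∏ ℓ, ∑ t, W x s t * V ℓ t (u ℓ) := by
    rw [show {ω' | ((fun ℓ : {ℓ // ℓ ∈ 𝓛} => ω'.2.2.2 ℓ.1) = fun ℓ => u ℓ.1) ∧
        ω'.1 = x ∧ ((fun ℓ : {ℓ // ℓ ∉ 𝓛} => ω'.2.2.2 ℓ.1), ω'.2.1) = (fun ℓ => u ℓ.1, s)}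
        = {ω' : X × S × (Fin L → Y) × (Fin L → U) | ω'.1 ∈ ({x} : Finset X) ∧
          ω'.2.1 = s ∧ (∀ ℓ ∈ (∅ : Finset (Fin L)), ω'.2.2.1 ℓ = y ℓ) ∧
          (∀ ℓ ∈ (Finset.univ : Finset (Fin L)), ω'.2.2.2 ℓ = u ℓ)} from by
      ext ω'
      have hs := cond_split 𝓛 (fun ℓ => ω'.2.2.2 ℓ = u ℓ)
      simp only [Set.mem_setOf_eq, funext_iff, Subtype.forall, Prod.mk.injEq,
        Finset.mem_univ, true_and, true_implies, Finset.notMem_empty,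
        false_implies, implies_true, Finset.mem_singleton] at *
      tauto]
    rw [marg p W hW1 V hV1 q hq _ _ _ s y u, Finset.sum_singleton]
    rw [Finset.prod_empty, Finset.empty_inter, Finset.prod_empty, Finset.sdiff_empty,
      one_mul, one_mul]
  have eBC2 : prOf q {ω' | ω'.1 = x ∧
      ((fun ℓ : {ℓ // ℓ ∉ 𝓛} => ω'.2.2.2 ℓ.1), ω'.2.1) = (fun ℓ => u ℓ.1, s)}
      = p (x, s) * ∏ ℓ ∈ 𝓛ᶜ, ∑ t, W x s t * V ℓ t (u ℓ) := by
    rw [show {ω' | ω'.1 = x ∧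
        ((fun ℓ : {ℓ // ℓ ∉ 𝓛} => ω'.2.2.2 ℓ.1), ω'.2.1) = (fun ℓ => u ℓ.1, s)}
        = {ω' : X × S × (Fin L → Y) × (Fin L → U) | ω'.1 ∈ ({x} : Finset X) ∧
          ω'.2.1 = s ∧ (∀ ℓ ∈ (∅ : Finset (Fin L)), ω'.2.2.1 ℓ = y ℓ) ∧
          (∀ ℓ ∈ 𝓛ᶜ, ω'.2.2.2 ℓ = u ℓ)} from by
      ext ω'
      simp only [Set.mem_setOf_eq, funext_iff, Subtype.forall, Prod.mk.injEq,
        Finset.mem_univ, true_and, true_implies, Finset.mem_compl,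
        Finset.notMem_empty, false_implies, implies_true, Finset.mem_singleton] at *
      tauto]
    rw [marg p W hW1 V hV1 q hq _ _ _ s y u, Finset.sum_singleton]
    rw [Finset.prod_empty, Finset.empty_inter, Finset.prod_empty, Finset.sdiff_empty,
      one_mul, one_mul]
  -- the per-sensor terms
  have eper : ∀ i ∈ 𝓛,
      Real.log (prOf q {ω' | ω'.2.2.2 i = u i ∧ ω'.2.2.1 i = y i ∧ (ω'.1, ω'.2.1) = (x, s)} *
          prOf q {ω' | (ω'.1, ω'.2.1) = (x, s)} /
        (prOf q {ω' | ω'.2.2.2 i = u i ∧ (ω'.1, ω'.2.1) = (x, s)} *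
          prOf q {ω' | ω'.2.2.1 i = y i ∧ (ω'.1, ω'.2.1) = (x, s)}))
      = Real.log (V i (y i) (u i)) - Real.log (∑ t, W x s t * V i t (u i)) := by
    intro i _
    have e1 : prOf q {ω' | ω'.2.2.2 i = u i ∧ ω'.2.2.1 i = y i ∧ (ω'.1, ω'.2.1) = (x, s)}
        = p (x, s) * (W x s (y i) * V i (y i) (u i)) := by
      rw [show {ω' | ω'.2.2.2 i = u i ∧ ω'.2.2.1 i = y i ∧ (ω'.1, ω'.2.1) = (x, s)}
          = {ω' : X × S × (Fin L → Y) × (Fin L → U) | ω'.1 ∈ ({x} : Finset X) ∧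
            ω'.2.1 = s ∧ (∀ ℓ ∈ ({i} : Finset (Fin L)), ω'.2.2.1 ℓ = y ℓ) ∧
            (∀ ℓ ∈ ({i} : Finset (Fin L)), ω'.2.2.2 ℓ = u ℓ)} from by
        ext ω'
        simp only [Set.mem_setOf_eq, Prod.mk.injEq, Finset.mem_singleton, forall_eq] at *
        tauto]
      rw [marg p W hW1 V hV1 q hq _ _ _ s y u, Finset.sum_singleton]
      rw [Finset.sdiff_self, Finset.prod_empty, mul_one, Finset.inter_self,
        Finset.prod_singleton, Finset.prod_singleton]
    have e2 : prOf q {ω' | (ω'.1, ω'.2.1) = (x, s)} = p (x, s) := by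
      rw [show {ω' : X × S × (Fin L → Y) × (Fin L → U) | (ω'.1, ω'.2.1) = (x, s)}
          = {ω' : X × S × (Fin L → Y) × (Fin L → U) | ω'.1 ∈ ({x} : Finset X) ∧
            ω'.2.1 = s ∧ (∀ ℓ ∈ (∅ : Finset (Fin L)), ω'.2.2.1 ℓ = y ℓ) ∧
            (∀ ℓ ∈ (∅ : Finset (Fin L)), ω'.2.2.2 ℓ = u ℓ)} from by
        ext ω'
        simp only [Set.mem_setOf_eq, Prod.mk.injEq, Finset.mem_singleton,
          Finset.notMem_empty, false_implies, implies_true, and_true] at *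
        try tauto]
      rw [marg p W hW1 V hV1 q hq _ _ _ s y u, Finset.sum_singleton]
      simp
    have e3 : prOf q {ω' | ω'.2.2.2 i = u i ∧ (ω'.1, ω'.2.1) = (x, s)}
        = p (x, s) * ∑ t, W x s t * V i t (u i) := by
      rw [show {ω' | ω'.2.2.2 i = u i ∧ (ω'.1, ω'.2.1) = (x, s)}
          = {ω' : X × S × (Fin L → Y) × (Fin L → U) | ω'.1 ∈ ({x} : Finset X) ∧
            ω'.2.1 = s ∧ (∀ ℓ ∈ (∅ : Finset (Fin L)), ω'.2.2.1 ℓ = y ℓ) ∧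
            (∀ ℓ ∈ ({i} : Finset (Fin L)), ω'.2.2.2 ℓ = u ℓ)} from by
        ext ω'
        simp only [Set.mem_setOf_eq, Prod.mk.injEq, Finset.mem_singleton, forall_eq,
          Finset.notMem_empty, false_implies, implies_true, true_and] at *
        tauto]
      rw [marg p W hW1 V hV1 q hq _ _ _ s y u, Finset.sum_singleton]
      rw [Finset.prod_empty, Finset.empty_inter, Finset.prod_empty, Finset.sdiff_empty,
        one_mul, one_mul, Finset.prod_singleton]
    have e4 : prOf q {ω' | ω'.2.2.1 i = y i ∧ (ω'.1, ω'.2.1) = (x, s)}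
        = p (x, s) * W x s (y i) := by
      rw [show {ω' | ω'.2.2.1 i = y i ∧ (ω'.1, ω'.2.1) = (x, s)}
          = {ω' : X × S × (Fin L → Y) × (Fin L → U) | ω'.1 ∈ ({x} : Finset X) ∧
            ω'.2.1 = s ∧ (∀ ℓ ∈ ({i} : Finset (Fin L)), ω'.2.2.1 ℓ = y ℓ) ∧
            (∀ ℓ ∈ (∅ : Finset (Fin L)), ω'.2.2.2 ℓ = u ℓ)} from by
        ext ω'
        simp only [Set.mem_setOf_eq, Prod.mk.injEq, Finset.mem_singleton, forall_eq,
          Finset.notMem_empty, false_implies, implies_true, and_true] at *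
        tauto]
      rw [marg p W hW1 V hV1 q hq _ _ _ s y u, Finset.sum_singleton]
      rw [show ({i} : Finset (Fin L)) ∩ ∅ = ∅ from Finset.inter_empty _,
        Finset.prod_empty, mul_one, show (∅ : Finset (Fin L)) \ {i} = ∅ from
          Finset.empty_sdiff _, Finset.prod_empty, mul_one, Finset.prod_singleton]
    rw [e1, e2, e3, e4, loghelp _ _ _ _
      (ne_of_gt (mul_pos hpp (mul_pos (hWp i) (hVp i)))) (ne_of_gt hpp)
      (ne_of_gt (mul_pos hpp (hφp i))) (ne_of_gt (mul_pos hpp (hWp i)))]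
    rw [Real.log_mul (ne_of_gt hpp) (ne_of_gt (mul_pos (hWp i) (hVp i))),
      Real.log_mul (ne_of_gt (hWp i)) (ne_of_gt (hVp i)),
      Real.log_mul (ne_of_gt hpp) (ne_of_gt (hφp i)),
      Real.log_mul (ne_of_gt hpp) (ne_of_gt (hWp i))]
    ring
  rw [eA, eC, eAC, eBC, eA2, eBC2, Finset.sum_congr rfl eper]
  rw [loghelp _ _ _ _
    (ne_of_gt (mul_pos hgp (Finset.prod_pos fun ℓ _ => hVp ℓ))) (ne_of_gt hhp)
    (ne_of_gt hkp) (ne_of_gt (mul_pos hgp (Finset.prod_pos fun ℓ _ => hVp ℓ)))]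
  rw [loghelp _ _ _ _
    (ne_of_gt (mul_pos hpp (Finset.prod_pos fun ℓ _ => hφp ℓ))) (ne_of_gt hhp)
    (ne_of_gt hkp) (ne_of_gt (mul_pos hpp (Finset.prod_pos fun ℓ _ => hφp ℓ)))]
  rw [Real.log_mul (ne_of_gt hgp) (ne_of_gt (Finset.prod_pos fun ℓ _ => hVp ℓ)),
    Real.log_mul (ne_of_gt hgp)
      (ne_of_gt (Finset.prod_pos (s := 𝓛ᶜ) fun ℓ _ => hVp ℓ)),
    Real.log_mul (ne_of_gt hpp) (ne_of_gt (Finset.prod_pos fun ℓ _ => hφp ℓ)),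
    Real.log_mul (ne_of_gt hpp)
      (ne_of_gt (Finset.prod_pos (s := 𝓛ᶜ) fun ℓ _ => hφp ℓ)),
    Real.log_prod (fun ℓ _ => ne_of_gt (hVp ℓ)),
    Real.log_prod (s := 𝓛ᶜ) (fun ℓ _ => ne_of_gt (hVp ℓ)),
    Real.log_prod (fun ℓ _ => ne_of_gt (hφp ℓ)),
    Real.log_prod (s := 𝓛ᶜ) (fun ℓ _ => ne_of_gt (hφp ℓ)),
    Finset.sum_sub_distrib]
  have c1 := Finset.sum_add_sum_compl 𝓛 (fun ℓ => Real.log (V ℓ (y ℓ) (u ℓ)))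
  have c2 := Finset.sum_add_sum_compl 𝓛 (fun ℓ => Real.log (∑ t, W x s t * V ℓ t (u ℓ)))
  linarith
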